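/- Let E be a finite-dimensional real inner product space, F : E → ℝ differentiable with F ≥ 0, and λ > 0. Suppose that every gradient-flow trajectory w : [0,∞) → E of F satisfies F(w(t)) ≤ F(w(0)) / (λ t) for all t > 0. Then every gradient-flow trajectory w : [0,∞) → E of F satisfies F(w(t)) ≤ F(w(0)) · exp(−⌊λ t / e⌋) for all t ≥ 0, where ⌊·⌋ denotes the floor function and e is Euler's number. -/

import Mathlib

open RealInnerProductSpace

/-- If gradient flow converges at rate `F(w(0))/(λt)` from every initial point, then it
in fact converges at an exponential rate `F(w(0))·e^{-⌊λt/e⌋}`. -/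
theorem linear_rate_to_exponential_rate
    {E : Type*} [NormedAddCommGroup E] [InnerProductSpace ℝ E] [FiniteDimensional ℝ E]
    (F : E → ℝ) (hF : Differentiable ℝ F) (hFnonneg : ∀ u, 0 ≤ F u)
    (lam : ℝ) (hlam : 0 < lam)
    (hrate : ∀ w : ℝ → E, (∀ t : ℝ, 0 ≤ t → HasDerivAt w (-gradient F (w t)) t) →
      ∀ t : ℝ, 0 < t → F (w t) ≤ F (w 0) / (lam * t)) :
    ∀ w : ℝ → E, (∀ t : ℝ, 0 ≤ t → HasDerivAt w (-gradient F (w t)) t) →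
      ∀ t : ℝ, 0 ≤ t →
        F (w t) ≤ F (w 0) * Real.exp (-(⌊lam * t / Real.exp 1⌋ : ℝ)) := by
  intro w hw t ht
  have hexp : (0:ℝ) < Real.exp 1 := Real.exp_pos 1
  set c : ℝ := Real.exp 1 / lam with hc
  have hcpos : 0 < c := by positivity
  -- derivative of F ∘ w
  have hderivF : ∀ s : ℝ, 0 ≤ s →
      HasDerivAt (F ∘ w) (-‖gradient F (w s)‖ ^ 2) s := by
    intro s hs
    have hg : HasGradientAt F (gradient F (w s)) (w s) := (hF (w s)).hasGradientAt
    have hfd := hg.hasFDerivAt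
    have h2 := hfd.comp_hasDerivAt s (hw s hs)
    refine h2.congr_deriv ?_
    rw [InnerProductSpace.toDual_apply_apply, inner_neg_right, real_inner_self_eq_norm_sq]
  -- F ∘ w is antitone on [0, ∞)
  have hmono : AntitoneOn (F ∘ w) (Set.Ici 0) := by
    apply antitoneOn_of_deriv_nonpos (convex_Ici 0)
    · exact hF.continuous.comp_continuousOn
        (fun s hs => ((hw s hs).continuousAt).continuousWithinAt)
    · intro s hs
      rw [interior_Ici] at hs
      exact (hderivF s hs.le).differentiableAt.differentiableWithinAt
    · intro s hs
      rw [interior_Ici] at hs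
      rw [(hderivF s hs.le).deriv]
      exact neg_nonpos.mpr (sq_nonneg _)
  -- one step of size c contracts by e
  have hstep : ∀ a : ℝ, 0 ≤ a → F (w (a + c)) ≤ F (w a) / Real.exp 1 := by
    intro a ha
    have hv : ∀ s : ℝ, 0 ≤ s →
        HasDerivAt (fun s => w (s + a)) (-gradient F (w (s + a))) s := by
      intro s hs
      have h1 : HasDerivAt (fun s : ℝ => s + a) 1 s := (hasDerivAt_id s).add_const a
      have := (hw (s + a) (add_nonneg hs ha)).scomp s h1
      simpa [Function.comp_def] using this
    have h := hrate _ hv c hcpos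
    have hlc : lam * c = Real.exp 1 := by
      rw [hc]; field_simp [hlam.ne']
    rw [hlc] at h
    simpa [add_comm] using h
  -- iterate
  have hiter : ∀ n : ℕ, F (w (n * c)) ≤ F (w 0) * Real.exp (-(n : ℝ)) := by
    intro n
    induction n with
    | zero => simp
    | succ n ih =>
      have h1 := hstep (n * c) (by positivity)
      have h2 : F (w (n * c)) / Real.exp 1 ≤ F (w 0) * Real.exp (-(n : ℝ)) / Real.exp 1 :=
        div_le_div_of_nonneg_right ih hexp.le
      calc F (w ((n + 1 : ℕ) * c)) = F (w (n * c + c)) := by push_cast; ring_nf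
        _ ≤ F (w (n * c)) / Real.exp 1 := h1
        _ ≤ F (w 0) * Real.exp (-(n : ℝ)) / Real.exp 1 := h2
        _ = F (w 0) * Real.exp (-((n : ℕ) + 1 : ℝ)) := by
            rw [mul_div_assoc, ← Real.exp_sub]
            ring_nf
        _ = F (w 0) * Real.exp (-((n + 1 : ℕ) : ℝ)) := by push_cast; ring_nf
  -- finish
  have hn0 : (0:ℤ) ≤ ⌊lam * t / Real.exp 1⌋ := Int.floor_nonneg.mpr (by positivity)
  set m : ℕ := (⌊lam * t / Real.exp 1⌋).toNat with hm
  have hmz : ((m : ℤ) : ℝ) = (⌊lam * t / Real.exp 1⌋ : ℝ) := by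
    rw [hm, Int.toNat_of_nonneg hn0]
  have hfle : ((⌊lam * t / Real.exp 1⌋ : ℤ) : ℝ) ≤ lam * t / Real.exp 1 := Int.floor_le _
  have hmle : (m : ℝ) * c ≤ t := by
    have h1 : (m : ℝ) ≤ lam * t / Real.exp 1 := by
      rw [← hmz] at hfle; exact_mod_cast hfle
    rw [hc]
    calc (m:ℝ) * (Real.exp 1 / lam) ≤ (lam * t / Real.exp 1) * (Real.exp 1 / lam) :=
          mul_le_mul_of_nonneg_right h1 (by positivity)
      _ = t := by field_simp
  have hmem1 : (m : ℝ) * c ∈ Set.Ici (0:ℝ) := Set.mem_Ici.mpr (by positivity)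
  have hmem2 : t ∈ Set.Ici (0:ℝ) := ht
  have := hmono hmem1 hmem2 hmle
  calc F (w t) ≤ F (w ((m : ℝ) * c)) := this
    _ ≤ F (w 0) * Real.exp (-(m : ℝ)) := hiter m
    _ = F (w 0) * Real.exp (-(⌊lam * t / Real.exp 1⌋ : ℝ)) := by rw [← hmz]; norm_num
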